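/- For m ≥ 2, the map u : Z_{2m} → Z_{2m-1} defined by u(a) = a-1 if 0 < a ≤ m and u(a) = a+1 if -m ≤ a < 0 is a surjective homomorphism of Sugihara algebras, i.e., it preserves min, max, negation ¬a = -a, and the Sugihara implication. -/
import Mathlib


/-- Sugihara implication on the chain of integers. -/
def sImp (a b : ℤ) : ℤ := if a ≤ b then max (-a) b else min (-a) b

/-- Derived fusion operation. -/
def sFus (a b : ℤ) : ℤ := -(sImp a (-b))

/-- Universe of the Sugihara algebra Z_{2m-1}. -/
def Zodd (m : ℤ) : Set ℤ := {a | -(m-1) ≤ a ∧ a ≤ m-1}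

/-- Universe of the Sugihara algebra Z_{2m}. -/
def Zeven (m : ℤ) : Set ℤ := {a | -m ≤ a ∧ a ≤ m ∧ a ≠ 0}

/-- The collapsing map from Z_{2m} onto Z_{2m-1}. -/
def uMap (a : ℤ) : ℤ := if 0 < a then a - 1 else a + 1

/-- For m ≥ 2, u is a surjective Sugihara algebra homomorphism
from Z_{2m} onto Z_{2m-1}. -/
theorem uMap_surjective_hom (m : ℤ) (hm : 2 ≤ m) :
    (∀ a ∈ Zeven m, uMap a ∈ Zodd m) ∧
    (∀ b ∈ Zodd m, ∃ a ∈ Zeven m, uMap a = b) ∧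
    (∀ a ∈ Zeven m, ∀ b ∈ Zeven m,
      uMap (min a b) = min (uMap a) (uMap b) ∧
      uMap (max a b) = max (uMap a) (uMap b) ∧
      uMap (-a) = -(uMap a) ∧
      uMap (sImp a b) = sImp (uMap a) (uMap b)) := by
  refine ⟨?_, ?_, ?_⟩
  · intro a ha
    obtain ⟨h1, h2, h3⟩ := ha
    simp only [Zodd, Set.mem_setOf_eq, uMap]
    split_ifs <;> omega
  · intro b hb
    obtain ⟨h1, h2⟩ := hb
    rcases le_or_gt 0 b with h | h
    · exact ⟨b + 1, ⟨by omega, by omega, by omega⟩, by simp [uMap]; omega⟩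
    · exact ⟨b - 1, ⟨by omega, by omega, by omega⟩, by simp [uMap]; omega⟩
  · intro a ha b hb
    obtain ⟨ha1, ha2, ha3⟩ := ha
    obtain ⟨hb1, hb2, hb3⟩ := hb
    refine ⟨?_, ?_, ?_, ?_⟩
    · simp only [uMap]; split_ifs <;> omega
    · simp only [uMap]; split_ifs <;> omega
    · simp only [uMap]; split_ifs <;> omega
    · simp only [uMap, sImp]; split_ifs <;> omega
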